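/- arXiv:1306.4016 — 4 statements merged into one kernel-verified Lean document; each statement's English description precedes it below -/
import Mathlib

section
/- Let $a_1,\dots,a_{m-1}, c, b_{m-1},\dots,b_1$ be nonzero complex numbers and for $0 \le k \le 2m-1$ define $p_0 = 1$, $p_k = a_1\cdots a_{k-1}(a_k+b_k)$ for $1 \le k \le m-1$, and $p_k = a_1\cdots a_{m-1}\, c\, b_{m-1}\cdots b_{2m-k}$ for $m \le k \le 2m-1$. Then for every $1 \le l \le m-1$, the alternating sum $\sum_{k=0}^{l} (-1)^k p_{l-k}\, p_{2m-1+k-l}$ equals $(a_1\cdots a_l)^2\, a_{l+1}\cdots a_{m-1}\, c\, b_{m-1}\cdots b_{l+1}$. -/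
open Finset

/-- Lemma 4.3 (telescoping of the alternating sum of Plücker coordinates):
for `1 ≤ l ≤ m-1`,
`∑_{k=0}^{l} (-1)^k p_{l-k} p_{2m-1+k-l} = (a_1⋯a_l)^2 a_{l+1}⋯a_{m-1} c b_{m-1}⋯b_{l+1}`. -/
theorem stmt0 (m : ℕ) (hm : 2 ≤ m) (a b : ℕ → ℂ) (c : ℂ)
    (ha : ∀ i, 1 ≤ i → i ≤ m - 1 → a i ≠ 0)
    (hb : ∀ i, 1 ≤ i → i ≤ m - 1 → b i ≠ 0) (hc : c ≠ 0)
    (p : ℕ → ℂ) (hp0 : p 0 = 1)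
    (hp1 : ∀ k, 1 ≤ k → k ≤ m - 1 →
      p k = (∏ i ∈ Finset.Icc 1 (k - 1), a i) * (a k + b k))
    (hp2 : ∀ k, m ≤ k → k ≤ 2 * m - 1 →
      p k = (∏ i ∈ Finset.Icc 1 (m - 1), a i) * c * ∏ i ∈ Finset.Icc (2 * m - k) (m - 1), b i)
    (l : ℕ) (hl1 : 1 ≤ l) (hl2 : l ≤ m - 1) :
    ∑ k ∈ Finset.range (l + 1), (-1 : ℂ) ^ k * p (l - k) * p (2 * m - 1 + k - l)
      = (∏ i ∈ Finset.Icc 1 l, a i) ^ 2 * (∏ i ∈ Finset.Icc (l + 1) (m - 1), a i) * c *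
        ∏ i ∈ Finset.Icc (l + 1) (m - 1), b i := by
  set A : ℂ := ∏ i ∈ Icc 1 (m - 1), a i with hA
  set f : ℕ → ℂ := fun j => (∏ i ∈ Icc 1 j, a i) * A * c * ∏ i ∈ Icc (j + 1) (m - 1), b i
    with hf
  -- key identity
  have key : ∀ j, 1 ≤ j → j ≤ m - 1 → p j * p (2 * m - 1 - j) = f j + f (j - 1) := by
    intro j hj1 hj2
    have h1 := hp1 j hj1 hj2
    have h2 := hp2 (2 * m - 1 - j) (by omega) (by omega)
    have e1 : 2 * m - (2 * m - 1 - j) = j + 1 := by omega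
    rw [e1] at h2
    have hsA : (∏ i ∈ Icc 1 j, a i) = (∏ i ∈ Icc 1 (j - 1), a i) * a j := by
      have hj : j - 1 + 1 = j := by omega
      rw [← hj, Finset.prod_Icc_succ_top (by omega), hj]
    have hsB : (∏ i ∈ Icc j (m - 1), b i) = b j * ∏ i ∈ Icc (j + 1) (m - 1), b i := by
      have h : Icc j (m - 1) = Ico j m := by
        rw [← Finset.Ico_add_one_right_eq_Icc]; congr 1; omega
      have h' : Icc (j + 1) (m - 1) = Ico (j + 1) m := by
        rw [← Finset.Ico_add_one_right_eq_Icc]; congr 1; omega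
      rw [h, h', Finset.prod_eq_prod_Ico_succ_bot (by omega)]
    have ej : j - 1 + 1 = j := by omega
    rw [h1, h2, hf]
    simp only [ej]
    rw [hsA, hsB]
    ring
  have key0 : p 0 * p (2 * m - 1) = f 0 := by
    have h2 := hp2 (2 * m - 1) (by omega) (by omega)
    have e1 : 2 * m - (2 * m - 1) = 1 := by omega
    rw [e1] at h2
    rw [hp0, h2, hf]
    simp
  have claim : ∀ n, n < l →
      ∑ k ∈ Finset.range (n + 1), (-1 : ℂ) ^ k * p (l - k) * p (2 * m - 1 + k - l)
        = f l + (-1 : ℂ) ^ n * f (l - n - 1) := by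
    intro n
    induction n with
    | zero =>
      intro _
      have e : 2 * m - 1 + 0 - l = 2 * m - 1 - l := by omega
      simp only [zero_add, Finset.sum_range_one, pow_zero, one_mul, Nat.sub_zero, e]
      rw [key l hl1 hl2]
    | succ n ih =>
      intro h
      rw [Finset.sum_range_succ, ih (by omega)]
      have e : 2 * m - 1 + (n + 1) - l = 2 * m - 1 - (l - (n + 1)) := by omega
      have e2 : l - (n + 1) = l - n - 1 := by omega
      rw [mul_assoc, e, key (l - (n + 1)) (by omega) (by omega), e2, pow_succ]
      ring
  obtain ⟨l', rfl⟩ : ∃ l', l = l' + 1 := ⟨l - 1, by omega⟩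
  rw [Finset.sum_range_succ, claim l' (by omega)]
  have e : 2 * m - 1 + (l' + 1) - (l' + 1) = 2 * m - 1 := by omega
  have e2 : l' + 1 - l' - 1 = 0 := by omega
  have e3 : l' + 1 - (l' + 1) = 0 := by omega
  rw [e, e2, e3, mul_assoc, key0, pow_succ]
  have hAsplit : A = (∏ i ∈ Icc 1 (l' + 1), a i) * ∏ i ∈ Icc (l' + 1 + 1) (m - 1), a i := by
    have h1 : ∀ x, Icc 1 x = Ioc 0 x := fun x => Finset.Icc_add_one_left_eq_Ioc 0 x
    have h2 : Icc (l' + 1 + 1) (m - 1) = Ioc (l' + 1) (m - 1) := Finset.Icc_add_one_left_eq_Ioc (l'+1) (m-1)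
    rw [hA, h1, h1, h2,
      Finset.prod_Ioc_consecutive _ (by omega : 0 ≤ l' + 1) (by omega : l' + 1 ≤ m - 1)]
  have : f (l' + 1) = (∏ i ∈ Icc 1 (l' + 1), a i) ^ 2 * (∏ i ∈ Icc (l' + 1 + 1) (m - 1), a i)
      * c * ∏ i ∈ Icc (l' + 1 + 1) (m - 1), b i := by
    rw [hf]; simp only; rw [hAsplit]; ring
  rw [← this]
  ring
end

section
/- Let $a_1,\dots,a_{m-1}, c, b_{m-1},\dots,b_1$ be nonzero complex numbers and define $p_k$ as follows: $p_0 = 1$, $p_k = a_1\cdots a_{k-1}(a_k+b_k)$ for $1 \le k \le m-1$, $p_k = a_1\cdots a_{m-1}\, c\, b_{m-1}\cdots b_{2m-k}$ for $m \le k \le 2m-1$. Then $p_1/p_0 + \sum_{l=1}^{m-1} \frac{p_{l+1} p_{2m-1-l}}{\sum_{k=0}^{l}(-1)^k p_{l-k} p_{2m-1+k-l}} + q\,\frac{p_1}{p_{2m-1}} = a_1 + \cdots + a_{m-1} + c + b_{m-1} + \cdots + b_1 + q\,\frac{a_1+b_1}{a_1\cdots a_{m-1}\, c\, b_{m-1}\cdots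 b_1}$, where $q$ is any complex number, assuming all denominators are nonzero. -/
open Finset

/-- Equality of the Plücker-coordinate form of the superpotential `W_q` for the odd
quadric `Q_{2m-1}` with its Laurent-polynomial form in factorization coordinates. -/
theorem stmt1 (m : ℕ) (hm : 2 ≤ m) (a b : ℕ → ℂ) (c q : ℂ)
    (ha : ∀ i, 1 ≤ i → i ≤ m - 1 → a i ≠ 0)
    (hb : ∀ i, 1 ≤ i → i ≤ m - 1 → b i ≠ 0) (hc : c ≠ 0)
    (p : ℕ → ℂ) (hp0 : p 0 = 1)
    (hp1 : ∀ k, 1 ≤ k → k ≤ m - 1 →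
      p k = (∏ i ∈ Finset.Icc 1 (k - 1), a i) * (a k + b k))
    (hp2 : ∀ k, m ≤ k → k ≤ 2 * m - 1 →
      p k = (∏ i ∈ Finset.Icc 1 (m - 1), a i) * c * ∏ i ∈ Finset.Icc (2 * m - k) (m - 1), b i)
    (hden : ∀ l, 1 ≤ l → l ≤ m - 1 →
      (∑ k ∈ Finset.range (l + 1), (-1 : ℂ) ^ k * p (l - k) * p (2 * m - 1 + k - l)) ≠ 0)
    (htop : p (2 * m - 1) ≠ 0) :
    p 1 / p 0
      + (∑ l ∈ Finset.Icc 1 (m - 1), p (l + 1) * p (2 * m - 1 - l) /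
          (∑ k ∈ Finset.range (l + 1), (-1 : ℂ) ^ k * p (l - k) * p (2 * m - 1 + k - l)))
      + q * p 1 / p (2 * m - 1)
    = (∑ i ∈ Finset.Icc 1 (m - 1), a i) + c + (∑ i ∈ Finset.Icc 1 (m - 1), b i)
      + q * (a 1 + b 1) /
          ((∏ i ∈ Finset.Icc 1 (m - 1), a i) * c * ∏ i ∈ Finset.Icc 1 (m - 1), b i) := by
  have haprod : ∀ l, l ≤ m - 1 → (∏ i ∈ Icc 1 l, a i) ≠ 0 := by
    intro l hl
    exact Finset.prod_ne_zero_iff.mpr fun i hi =>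
      ha i (mem_Icc.mp hi).1 (le_trans (mem_Icc.mp hi).2 hl)
  have hbprod : ∀ l, 1 ≤ l → (∏ i ∈ Icc l (m - 1), b i) ≠ 0 := by
    intro l hl
    exact Finset.prod_ne_zero_iff.mpr fun i hi =>
      hb i (le_trans hl (mem_Icc.mp hi).1) (mem_Icc.mp hi).2
  have hAne : (∏ i ∈ Icc 1 (m - 1), a i) ≠ 0 := haprod _ le_rfl
  have hBne : (∏ i ∈ Icc 1 (m - 1), b i) ≠ 0 := hbprod 1 le_rfl
  -- closed form of the denominators
  have hD : ∀ l, l ≤ m - 1 →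
      (∑ k ∈ Finset.range (l + 1), (-1 : ℂ) ^ k * p (l - k) * p (2 * m - 1 + k - l))
        = (∏ i ∈ Icc 1 l, a i) *
          ((∏ i ∈ Icc 1 (m - 1), a i) * c * ∏ i ∈ Icc (l + 1) (m - 1), b i) := by
    intro l
    induction l with
    | zero =>
      intro _
      rw [Finset.sum_range_one]
      norm_num
      rw [hp0, hp2 (2 * m - 1) (by omega) (by omega)]
      have h1 : 2 * m - (2 * m - 1) = 1 := by omega
      rw [h1]
      ring
    | succ l ih =>
      intro hl
      rw [Finset.sum_range_succ']
      have e1 : ∀ k ∈ Finset.range (l + 1),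
          (-1 : ℂ) ^ (k + 1) * p (l + 1 - (k + 1)) * p (2 * m - 1 + (k + 1) - (l + 1))
            = -((-1 : ℂ) ^ k * p (l - k) * p (2 * m - 1 + k - l)) := by
        intro k hk
        have h1 : l + 1 - (k + 1) = l - k := by omega
        have h2 : 2 * m - 1 + (k + 1) - (l + 1) = 2 * m - 1 + k - l := by omega
        rw [h1, h2, pow_succ]
        ring
      rw [Finset.sum_congr rfl e1, Finset.sum_neg_distrib, ih (by omega)]
      have h3 : l + 1 - 0 = l + 1 := by omega
      have h4 : 2 * m - 1 + 0 - (l + 1) = 2 * m - 2 - l := by omega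
      rw [h3, h4]
      rw [hp1 (l + 1) (by omega) (by omega), hp2 (2 * m - 2 - l) (by omega) (by omega)]
      have h5 : 2 * m - (2 * m - 2 - l) = l + 2 := by omega
      have h6 : l + 1 - 1 = l := by omega
      rw [h5, h6]
      have h7 : Finset.Icc (l + 1) (m - 1) = insert (l + 1) (Finset.Icc (l + 2) (m - 1)) := by
        ext x
        simp only [Finset.mem_insert, Finset.mem_Icc]
        omega
      have h8 : (l + 1) ∉ Finset.Icc (l + 2) (m - 1) := by simp
      rw [Finset.prod_Icc_succ_top (by omega : 1 ≤ l + 1) a, h7, Finset.prod_insert h8]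
      ring
  -- each middle term
  have hterm : ∀ l ∈ Finset.Icc 1 (m - 2),
      p (l + 1) * p (2 * m - 1 - l) /
        (∑ k ∈ Finset.range (l + 1), (-1 : ℂ) ^ k * p (l - k) * p (2 * m - 1 + k - l))
      = a (l + 1) + b (l + 1) := by
    intro l hl
    obtain ⟨hl1, hl2⟩ := Finset.mem_Icc.mp hl
    rw [hD l (by omega), hp1 (l + 1) (by omega) (by omega),
      hp2 (2 * m - 1 - l) (by omega) (by omega)]
    have h1 : 2 * m - (2 * m - 1 - l) = l + 1 := by omega
    have h2 : l + 1 - 1 = l := by omega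
    rw [h1, h2, div_eq_iff]
    · ring
    · exact mul_ne_zero (haprod l (by omega))
        (mul_ne_zero (mul_ne_zero hAne hc) (hbprod (l + 1) (by omega)))
  -- top term
  have htermtop :
      p (m - 1 + 1) * p (2 * m - 1 - (m - 1)) /
        (∑ k ∈ Finset.range (m - 1 + 1),
          (-1 : ℂ) ^ k * p (m - 1 - k) * p (2 * m - 1 + k - (m - 1))) = c := by
    have h1 : m - 1 + 1 = m := by omega
    have h2 : 2 * m - 1 - (m - 1) = m := by omega
    rw [hD (m - 1) le_rfl, h1, h2, hp2 m (by omega) (by omega)]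
    have h3 : 2 * m - m = m := by omega
    have h4 : Finset.Icc m (m - 1) = ∅ := Finset.Icc_eq_empty (by omega)
    rw [h3, h4, Finset.prod_empty, div_eq_iff]
    · ring
    · exact mul_ne_zero hAne (by simp [hAne, hc])
  -- evaluate the sum
  have hmm : m - 1 = m - 2 + 1 := by omega
  have hsum : (∑ l ∈ Finset.Icc 1 (m - 1), p (l + 1) * p (2 * m - 1 - l) /
          (∑ k ∈ Finset.range (l + 1), (-1 : ℂ) ^ k * p (l - k) * p (2 * m - 1 + k - l)))
      = (∑ i ∈ Finset.Icc 2 (m - 1), (a i + b i)) + c := by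
    rw [hmm, Finset.sum_Icc_succ_top (by omega)]
    rw [Finset.sum_congr rfl hterm]
    congr 1
    · have h1 : Finset.Icc 2 (m - 2 + 1) = (Finset.Icc 1 (m - 2)).map (addRightEmbedding 1) := by
        rw [Finset.map_add_right_Icc]
      rw [h1, Finset.sum_map]
      rfl
    · rw [← hmm]; exact htermtop
  -- first and last terms
  have hIcc1 : Finset.Icc 1 (m - 1) = insert 1 (Finset.Icc 2 (m - 1)) := by
    ext x
    simp only [Finset.mem_insert, Finset.mem_Icc]
    omega
  have h1n : (1 : ℕ) ∉ Finset.Icc 2 (m - 1) := by simp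
  have hp1' : p 1 = a 1 + b 1 := by
    rw [hp1 1 le_rfl (by omega)]
    norm_num
  have hptop : p (2 * m - 1) =
      (∏ i ∈ Icc 1 (m - 1), a i) * c * ∏ i ∈ Icc 1 (m - 1), b i := by
    rw [hp2 (2 * m - 1) (by omega) (by omega)]
    have h1 : 2 * m - (2 * m - 1) = 1 := by omega
    rw [h1]
  rw [hsum, hp0, hp1', hptop, hIcc1, Finset.sum_insert h1n, Finset.sum_insert h1n,
    Finset.sum_add_distrib, div_one, mul_div_assoc]
  ring
end

section
/- Set $p_0 = 1$ and let $p_1,\dots,p_{2m-1}, q$ be complex numbers such that all the expressions below are defined and nonzero where they appear in denominators. Define $y_1 = p_1$, $y_i = p_i/p_{i-1}$ for $2 \le i \le m-1$, $z_1 = q/p_{2m-1}$, $z_i = \frac{\sum_{k=0}^{i-2}(-1)^k p_{i-2-k} p_{2m+1+k-i}}{\sum_{k=0}^{i-1}(-1)^k p_{i-1-k} p_{2m+k-i}}$ for $2 \le i \le m-1$, and $x = \frac{p_m}{\sum_{k=0}^{m-1}(-1)^k p_{m-1-k} p_{m+k}}$. Then $\sum_{i=1}^{m-1} y_i(1+z_i)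 + q\,\frac{x^2}{(x y_1 y_2 \cdots y_{m-1} - 1)\, z_1 z_2 \cdots z_{m-1}} = p_1 + \sum_{l=1}^{m-1} \frac{p_{l+1} p_{2m-1-l}}{\sum_{k=0}^{l}(-1)^k p_{l-k} p_{2m-1+k-l}} + q\,\frac{p_1}{p_{2m-1}}$. -/
open Finset

/-- Proposition 6.1: the Gorbounov–Smirnov change of coordinates transforms their
Landau–Ginzburg model into the Plücker-coordinate superpotential `W_q` for `Q_{2m-1}`.
Here `S i = ∑_{k=0}^{i-1} (-1)^k p_{i-1-k} p_{2m+k-i}` so that the denominator of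
`z_i` is `S i`, its numerator is `S (i-1)`, the denominator appearing in `x` is `S m`,
and the denominator of the `l`-th term of `W_q` is `S (l+1)`. -/
theorem stmt5 (m : ℕ) (hm : 2 ≤ m) (p : ℕ → ℂ) (q : ℂ) (hp0 : p 0 = 1)
    (S : ℕ → ℂ)
    (hS : ∀ i, S i = ∑ k ∈ Finset.range i, (-1 : ℂ) ^ k * p (i - 1 - k) * p (2 * m + k - i))
    (y z : ℕ → ℂ)
    (hy1 : y 1 = p 1) (hy : ∀ i, 2 ≤ i → i ≤ m - 1 → y i = p i / p (i - 1))
    (hz1 : z 1 = q / p (2 * m - 1)) (hz : ∀ i, 2 ≤ i → i ≤ m - 1 → z i = S (i - 1) / S i)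
    (x : ℂ) (hx : x = p m / S m)
    (hq : q ≠ 0)
    (hp : ∀ i, 1 ≤ i → i ≤ m - 1 → p i ≠ 0) (htop : p (2 * m - 1) ≠ 0)
    (hSne : ∀ i, 1 ≤ i → i ≤ m → S i ≠ 0)
    (hxy : x * (∏ i ∈ Finset.Icc 1 (m - 1), y i) - 1 ≠ 0) :
    (∑ i ∈ Finset.Icc 1 (m - 1), y i * (1 + z i))
      + q * x ^ 2 /
          ((x * (∏ i ∈ Finset.Icc 1 (m - 1), y i) - 1) * ∏ i ∈ Finset.Icc 1 (m - 1), z i)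
    = p 1 + (∑ l ∈ Finset.Icc 1 (m - 1), p (l + 1) * p (2 * m - 1 - l) / S (l + 1))
        + q * p 1 / p (2 * m - 1) := by
  have hm1 : 1 ≤ m - 1 := by omega
  -- the recurrence S (i+1) = p i * p (2m-1-i) - S i
  have hrec : ∀ i : ℕ, S (i + 1) = p i * p (2 * m - 1 - i) - S i := by
    intro i
    rw [hS (i + 1), hS i, Finset.sum_range_succ']
    have h0 : (-1 : ℂ) ^ 0 * p (i + 1 - 1 - 0) * p (2 * m + 0 - (i + 1))
        = p i * p (2 * m - 1 - i) := by
      have e1 : i + 1 - 1 - 0 = i := by omega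
      have e2 : 2 * m + 0 - (i + 1) = 2 * m - 1 - i := by omega
      rw [e1, e2]; ring
    rw [h0]
    have hcong : ∀ k ∈ Finset.range i,
        (-1 : ℂ) ^ (k + 1) * p (i + 1 - 1 - (k + 1)) * p (2 * m + (k + 1) - (i + 1))
        = -((-1 : ℂ) ^ k * p (i - 1 - k) * p (2 * m + k - i)) := by
      intro k hk
      have e1 : i + 1 - 1 - (k + 1) = i - 1 - k := by omega
      have e2 : 2 * m + (k + 1) - (i + 1) = 2 * m + k - i := by omega
      rw [e1, e2, pow_succ]; ring
    rw [Finset.sum_congr rfl hcong, Finset.sum_neg_distrib]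
    ring
  have hS1 : S 1 = p (2 * m - 1) := by
    rw [hS]; simp [hp0]
  -- symmetry S (m+1) = S (m-1)
  have hSm : S m = p (m - 1) * p m - S (m - 1) := by
    have := hrec (m - 1)
    have e1 : m - 1 + 1 = m := by omega
    have e2 : 2 * m - 1 - (m - 1) = m := by omega
    rwa [e1, e2] at this
  have hSm1 : S (m + 1) = S (m - 1) := by
    have := hrec m
    have e2 : 2 * m - 1 - m = m - 1 := by omega
    rw [e2, hSm] at this
    rw [this]; ring
  -- telescoping products
  have hyprod : ∀ n, 1 ≤ n → n ≤ m - 1 → (∏ i ∈ Finset.Icc 1 n, y i) = p n := by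
    intro n h1 h2
    induction n, h1 using Nat.le_induction with
    | base => simp [hy1]
    | succ n hn ih =>
      rw [Finset.prod_Icc_succ_top (by omega), ih (by omega)]
      rw [hy (n + 1) (by omega) h2]
      have e1 : n + 1 - 1 = n := by omega
      rw [e1]
      field_simp [hp n (by omega) (by omega)]
  have hzprod : ∀ n, 1 ≤ n → n ≤ m - 1 → (∏ i ∈ Finset.Icc 1 n, z i) = q / S n := by
    intro n h1 h2
    induction n, h1 using Nat.le_induction with
    | base => rw [Finset.Icc_self, Finset.prod_singleton, hz1, hS1]
    | succ n hn ih =>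
      rw [Finset.prod_Icc_succ_top (by omega), ih (by omega)]
      rw [hz (n + 1) (by omega) h2]
      have e1 : n + 1 - 1 = n := by omega
      rw [e1]
      field_simp [hSne n (by omega) (by omega)]
  -- the second LHS term equals p m ^ 2 / S m
  have h2nd : q * x ^ 2 /
      ((x * (∏ i ∈ Finset.Icc 1 (m - 1), y i) - 1) * ∏ i ∈ Finset.Icc 1 (m - 1), z i)
      = p m ^ 2 / S m := by
    rw [hyprod (m - 1) hm1 le_rfl, hzprod (m - 1) hm1 le_rfl, hx]
    have hSmne := hSne m (by omega) le_rfl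
    have hSm1ne := hSne (m - 1) (by omega) (by omega)
    have hfac : p m / S m * p (m - 1) - 1 = S (m - 1) / S m := by
      field_simp
      linear_combination -hSm
    rw [hfac]
    field_simp
  rw [h2nd]
  -- termwise identity for i ≥ 2
  have hterm : ∀ i ∈ Finset.Icc 2 (m - 1),
      y i * (1 + z i) = p i * p (2 * m - i) / S i := by
    intro i hi
    simp only [Finset.mem_Icc] at hi
    have hSi : S i = p (i - 1) * p (2 * m - i) - S (i - 1) := by
      have := hrec (i - 1)
      have e1 : i - 1 + 1 = i := by omega
      have e2 : 2 * m - 1 - (i - 1) = 2 * m - i := by omega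
      rwa [e1, e2] at this
    rw [hy i hi.1 hi.2, hz i hi.1 hi.2]
    have hpne : p (i - 1) ≠ 0 := hp (i - 1) (by omega) (by omega)
    have hSne' : S i ≠ 0 := hSne i (by omega) (by omega)
    field_simp
    linear_combination p i * hSi
  -- split LHS sum
  have hsplit : Finset.Icc 1 (m - 1) = insert 1 (Finset.Icc 2 (m - 1)) := by
    ext j; simp [Finset.mem_Icc]; omega
  have hLsum : (∑ i ∈ Finset.Icc 1 (m - 1), y i * (1 + z i))
      = p 1 + q * p 1 / p (2 * m - 1)
        + ∑ i ∈ Finset.Icc 2 (m - 1), p i * p (2 * m - i) / S i := by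
    rw [hsplit, Finset.sum_insert (by simp), Finset.sum_congr rfl hterm,
      hy1, hz1]
    field_simp
  rw [hLsum]
  -- reindex RHS sum
  have hRsum : (∑ l ∈ Finset.Icc 1 (m - 1), p (l + 1) * p (2 * m - 1 - l) / S (l + 1))
      = p m ^ 2 / S m + ∑ i ∈ Finset.Icc 2 (m - 1), p i * p (2 * m - i) / S i := by
    have step1 : (∑ l ∈ Finset.Icc 1 (m - 1), p (l + 1) * p (2 * m - 1 - l) / S (l + 1))
        = ∑ i ∈ Finset.Icc 2 m, p i * p (2 * m - i) / S i := by
      rw [show Finset.Icc 2 m = (Finset.Icc 1 (m - 1)).map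
          (addRightEmbedding 1) from by
        ext j
        simp only [Finset.mem_Icc, Finset.mem_map, addRightEmbedding_apply]
        constructor
        · intro h; exact ⟨j - 1, by omega, by omega⟩
        · rintro ⟨a, ha, rfl⟩; omega]
      rw [Finset.sum_map]
      refine Finset.sum_congr rfl fun l hl => ?_
      simp only [addRightEmbedding_apply]
      have e : 2 * m - 1 - l = 2 * m - (l + 1) := by omega
      rw [e]
    rw [step1, show Finset.Icc 2 m = insert m (Finset.Icc 2 (m - 1)) from by
      ext j; simp [Finset.mem_Icc]; omega,
      Finset.sum_insert (by simp; omega)]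
    have e : 2 * m - m = m := by omega
    rw [e, sq]
  rw [hRsum]
  ring
end

section
/- Let $a_1,\dots,a_{m-1}, b_1,\dots,b_{m-1}, c$ be nonzero complex numbers, and let $\bar u_2 = y_1(a_1)\cdots y_{m-1}(a_{m-1})\, y_m(c)\, y_{m-1}(b_{m-1})\cdots y_1(b_1)$ where $y_i(a) = I + a(E_{i+1,i} + E_{2m-i+1, 2m-i})$ for $1 \le i \le m-1$ and $y_m(c) = I + c\, E_{m+1,m}$. Then the last row of $\bar u_2$ is $(p_{2m-1}, p_{2m-2}, \dots, p_1, p_0)$, where $p_0 = 1$, $p_k = a_1\cdots a_{k-1}(a_k + b_k)$ for $1 \le k \le m-1$, and $p_k = a_1\cdots a_{m-1}\, c\, b_{m-1}\cdots b_{2m-k}$ for $m \le k \le 2m-1$. -/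
open Matrix Finset

/-- The lower unipotent generator `y_i(a) = I + a(E_{i+1,i} + E_{2m-i+1,2m-i})` for
`1 ≤ i ≤ m-1` and `y_m(c) = I + c E_{m+1,m}` (1-indexed positions, 0-indexed entries;
the second summand is present only when `i < m` since for `i = m` both coincide). -/
def yMat (m i : ℕ) (t : ℂ) : Matrix (Fin (2 * m)) (Fin (2 * m)) ℂ :=
  1 + t • Matrix.of ((fun j k =>
    (if (j : ℕ) = i ∧ (k : ℕ) + 1 = i then 1 else 0) +
    (if i < m ∧ (j : ℕ) = 2 * m - i ∧ (k : ℕ) + 1 = 2 * m - i then 1 else 0)) :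
      Matrix (Fin (2 * m)) (Fin (2 * m)) ℂ)
lemma vecMul_yMat (m : ℕ) (hm : 2 ≤ m) (i : ℕ) (hi1 : 1 ≤ i) (hi : i ≤ m) (t : ℂ)
    (w : Fin (2*m) → ℂ) (j : Fin (2*m)) :
    (w ᵥ* yMat m i t) j = w j + t * ((if (j:ℕ)+1 = i then w ⟨i, by omega⟩ else 0)
      + (if i < m ∧ (j:ℕ)+1 = 2*m-i then w ⟨2*m-i, by omega⟩ else 0)) := by
  classical
  rw [yMat, Matrix.vecMul_add, Matrix.vecMul_one]
  simp only [Pi.add_apply, Matrix.vecMul, dotProduct, Matrix.smul_apply,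
    Matrix.of_apply, smul_eq_mul, mul_add, Finset.sum_add_distrib]
  congr 1
  congr 1
  · rw [Finset.sum_eq_single (⟨i, by omega⟩ : Fin (2*m))]
    · by_cases h2 : (j:ℕ)+1 = i <;> simp [h2] <;> ring
    · intro k _ hk
      have : (k:ℕ) ≠ i := fun h => hk (Fin.ext h)
      simp [this]
    · simp
  · rw [Finset.sum_eq_single (⟨2*m-i, by omega⟩ : Fin (2*m))]
    · by_cases h1 : i < m <;> by_cases h2 : (j:ℕ)+1 = 2*m-i <;> simp [h1, h2] <;> ring
    · intro k _ hk
      have : (k:ℕ) ≠ 2*m-i := fun h => hk (Fin.ext h)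
      simp [this]
    · simp

noncomputable def vA (m : ℕ) (a : ℕ → ℂ) (n : ℕ) : Fin (2*m) → ℂ := fun j =>
  if 2*m-1-n ≤ (j:ℕ) then ∏ i ∈ Icc 1 (2*m-1-(j:ℕ)), a i else 0

lemma mul_row {k : ℕ} (M N : Matrix (Fin k) (Fin k) ℂ) (r j : Fin k) :
    (M * N) r j = ((fun x => M r x) ᵥ* N) j := by
  simp [Matrix.mul_apply, Matrix.vecMul, dotProduct]

lemma rowA (m : ℕ) (hm : 2 ≤ m) (a : ℕ → ℂ) :
    ∀ n, n ≤ m - 1 → ∀ j : Fin (2*m),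
      (((List.range n).map (fun i => yMat m (i + 1) (a (i + 1)))).prod)
        (⟨2*m-1, Nat.sub_one_lt (by omega)⟩ : Fin (2*m)) j = vA m a n j := by
  intro n
  induction n with
  | zero =>
    intro _ j
    simp only [List.range_zero, List.map_nil, List.prod_nil, vA]
    by_cases h : (j:ℕ) = 2*m-1
    · have hj : (⟨2*m-1, Nat.sub_one_lt (by omega)⟩ : Fin (2*m)) = j := Fin.ext h.symm
      rw [hj, Matrix.one_apply_eq]
      rw [if_pos (by omega)]
      rw [show 2*m-1-(j:ℕ) = 0 by omega]
      simp
    · rw [Matrix.one_apply_ne (by intro hh; exact h (by rw [← hh]))]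
      rw [if_neg (by omega)]
  | succ n ih =>
    intro hn j
    rw [List.range_succ, List.map_append, List.prod_append]
    simp only [List.map_cons, List.map_nil, List.prod_cons, List.prod_nil, mul_one]
    rw [mul_row]
    have hM : (fun x => (((List.range n).map (fun i => yMat m (i + 1) (a (i + 1)))).prod)
        (⟨2*m-1, Nat.sub_one_lt (by omega)⟩ : Fin (2*m)) x) = vA m a n := funext (ih (by omega))
    rw [hM, vecMul_yMat m hm (n+1) (by omega) (by omega)]
    have hv1 : vA m a n ⟨n+1, by omega⟩ = 0 := by
      rw [vA, if_neg (by simp; omega)]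
    by_cases hj : (j:ℕ) = 2*m-n-2
    · have h1 : ¬((j:ℕ)+1 = n+1) := by omega
      have h2 : n+1 < m ∧ (j:ℕ)+1 = 2*m-(n+1) := ⟨by omega, by omega⟩
      rw [if_neg h1, if_pos h2]
      have hv2 : vA m a n ⟨2*m-(n+1), by omega⟩ = ∏ i ∈ Icc 1 n, a i := by
        rw [vA]
        rw [if_pos (by simp; omega)]
        have : 2*m-1-((⟨2*m-(n+1), by omega⟩ : Fin (2*m)) : ℕ) = n := by simp; omega
        rw [this]
      rw [hv2, vA, vA, if_neg (by omega), if_pos (by omega)]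
      rw [show 2*m-1-(j:ℕ) = n+1 by omega]
      rw [Finset.prod_Icc_succ_top (by omega : 1 ≤ n+1)]
      ring
    · have h2 : ¬(n+1 < m ∧ (j:ℕ)+1 = 2*m-(n+1)) := by
        rintro ⟨_, h⟩; omega
      rw [if_neg h2]
      by_cases h1 : (j:ℕ)+1 = n+1
      · rw [if_pos h1]
        have : (⟨n+1, by omega⟩ : Fin (2*m)) = ⟨n+1, by omega⟩ := rfl
        rw [hv1]
        simp only [add_zero, mul_zero]
        rw [vA, vA, if_neg (by omega), if_neg (by omega)]
      · rw [if_neg h1]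
        simp only [add_zero, mul_zero]
        rw [vA, vA]
        by_cases hc : 2*m-1-n ≤ (j:ℕ)
        · rw [if_pos hc, if_pos (by omega)]
        · rw [if_neg hc, if_neg (by omega)]

noncomputable def uv (m : ℕ) (a b : ℕ → ℂ) (c : ℂ) (s : ℕ) : Fin (2*m) → ℂ := fun j =>
  if m + s ≤ (j:ℕ) then ∏ i ∈ Icc 1 (2*m-1-(j:ℕ)), a i
  else if m ≤ (j:ℕ) then
    (∏ i ∈ Icc 1 (2*m-2-(j:ℕ)), a i) * (a (2*m-1-(j:ℕ)) + b (2*m-1-(j:ℕ)))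
  else if m ≤ (j:ℕ) + s + 1 then
    (∏ i ∈ Icc 1 (m-1), a i) * c * ∏ i ∈ Icc ((j:ℕ)+1) (m-1), b i
  else 0

lemma u_step (m : ℕ) (hm : 2 ≤ m) (a b : ℕ → ℂ) (c : ℂ) (s : ℕ) (hs : s ≤ m-2)
    (j : Fin (2*m)) :
    (uv m a b c s ᵥ* yMat m (m-1-s) (b (m-1-s))) j = uv m a b c (s+1) j := by
  rw [vecMul_yMat m hm (m-1-s) (by omega) (by omega)]
  have hw1 : uv m a b c s ⟨m-1-s, by omega⟩ =
      (∏ i ∈ Icc 1 (m-1), a i) * c * ∏ i ∈ Icc (m-s) (m-1), b i := by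
    rw [uv]
    rw [if_neg (by simp; omega), if_neg (by simp; omega), if_pos (by simp; omega)]
    rw [show ((⟨m-1-s, by omega⟩ : Fin (2*m)) : ℕ) + 1 = m-s by simp; omega]
  have hw2 : uv m a b c s ⟨2*m-(m-1-s), by omega⟩ = ∏ i ∈ Icc 1 (m-2-s), a i := by
    rw [uv]
    rw [if_pos (by simp; omega)]
    rw [show 2*m-1-((⟨2*m-(m-1-s), by omega⟩ : Fin (2*m)) : ℕ) = m-2-s by simp; omega]
  by_cases hj1 : (j:ℕ) = m-2-s
  · rw [if_pos (by omega), if_neg (by rintro ⟨_, h⟩; omega), hw1]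
    have hu0 : uv m a b c s j = 0 := by
      rw [uv, if_neg (by omega), if_neg (by omega), if_neg (by omega)]
    rw [hu0, uv, if_neg (by omega), if_neg (by omega), if_pos (by omega)]
    rw [show Icc ((j:ℕ)+1) (m-1) = insert (m-1-s) (Icc (m-s) (m-1)) by
      ext x; simp [Finset.mem_Icc, Finset.mem_insert]; omega]
    rw [Finset.prod_insert (by simp [Finset.mem_Icc]; omega)]
    ring
  · by_cases hj2 : (j:ℕ) = m+s
    · rw [if_neg (by omega), if_pos (by constructor <;> omega), hw2]
      have hu0 : uv m a b c s j = ∏ i ∈ Icc 1 (m-1-s), a i := by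
        rw [uv, if_pos (by omega), show 2*m-1-(j:ℕ) = m-1-s by omega]
      rw [hu0, uv, if_neg (by omega), if_pos (by omega)]
      rw [show 2*m-2-(j:ℕ) = m-2-s by omega, show 2*m-1-(j:ℕ) = m-1-s by omega]
      rw [show m-1-s = (m-2-s)+1 by omega, Finset.prod_Icc_succ_top (by omega : 1 ≤ m-2-s+1)]
      ring
    · rw [if_neg (by omega), if_neg (by rintro ⟨_, h⟩; omega)]
      simp only [add_zero, mul_zero]
      rw [uv, uv]
      split_ifs <;> first | rfl | omega | (exfalso; omega)


lemma row_u0 (m : ℕ) (hm : 2 ≤ m) (a b : ℕ → ℂ) (c : ℂ) (k : Fin (2*m)) :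
    ((((List.range (m - 1)).map (fun i => yMat m (i + 1) (a (i + 1)))).prod *
      yMat m m c) (⟨2*m-1, Nat.sub_one_lt (by omega)⟩ : Fin (2*m)) k) = uv m a b c 0 k := by
  rw [mul_row]
  have hM : (fun x => (((List.range (m-1)).map (fun i => yMat m (i + 1) (a (i + 1)))).prod)
      (⟨2*m-1, Nat.sub_one_lt (by omega)⟩ : Fin (2*m)) x) = vA m a (m-1) := funext (rowA m hm a (m-1) le_rfl)
  rw [hM, vecMul_yMat m hm m (by omega) le_rfl]
  rw [show (if m < m ∧ (k:ℕ)+1 = 2*m-m then vA m a (m-1) ⟨2*m-m, by omega⟩ else 0) = 0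
    from if_neg (by rintro ⟨h, _⟩; omega), add_zero]
  have hv : vA m a (m-1) ⟨ m, by omega ⟩ = ∏ i ∈ Icc 1 (m-1), a i := by
    rw [vA, if_pos (by simp; omega)]
    rw [show 2*m-1-((⟨ m, by omega ⟩ : Fin (2*m)) : ℕ) = m-1 by simp; omega]
  by_cases hk : (k:ℕ)+1 = m
  · rw [if_pos hk, hv]
    have h0 : vA m a (m-1) k = 0 := by rw [vA, if_neg (by omega)]
    rw [h0, uv, if_neg (by omega), if_neg (by omega), if_pos (by omega)]
    rw [show Icc ((k:ℕ)+1) (m-1) = ∅ from Finset.Icc_eq_empty (by omega)]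
    simp
    ring
  · rw [if_neg hk, mul_zero, add_zero, vA, uv]
    by_cases h1 : m ≤ (k:ℕ)
    · rw [if_pos (by omega), if_pos (by omega)]
    · rw [if_neg (by omega), if_neg (by omega), if_neg (by omega), if_neg (by omega)]

lemma rowB (m : ℕ) (hm : 2 ≤ m) (a b : ℕ → ℂ) (c : ℂ) :
    ∀ n, n ≤ m-1 → ∀ j : Fin (2*m),
      (uv m a b c (m-1-n) ᵥ*
        (((List.range n).reverse.map (fun i => yMat m (i + 1) (b (i + 1)))).prod)) j
      = uv m a b c (m-1) j := by
  intro n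
  induction n with
  | zero =>
    intro _ j
    simp
  | succ n ih =>
    intro hn j
    rw [List.range_succ, List.reverse_append, List.reverse_singleton, List.map_append,
      List.prod_append, List.map_cons, List.map_nil, List.prod_cons, List.prod_nil, mul_one]
    rw [← Matrix.vecMul_vecMul]
    have hstep : (uv m a b c (m-1-(n+1)) ᵥ* yMat m (n+1) (b (n+1))) = uv m a b c (m-1-n) := by
      funext x
      have h1 : m-1-(n+1) = m-2-n := by omega
      have h2 : n+1 = m-1-(m-2-n) := by omega
      have h3 : m-1-n = (m-2-n)+1 := by omega
      rw [h1, h2, h3]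
      exact u_step m hm a b c (m-2-n) (by omega) x
    rw [hstep]
    exact ih (by omega) j


/-- The last row of `ū₂ = y₁(a₁)⋯y_{m-1}(a_{m-1}) y_m(c) y_{m-1}(b_{m-1})⋯y₁(b₁)`
is `(p_{2m-1}, p_{2m-2}, …, p_1, p_0)`, i.e. its `j`-th entry is `p_{2m-1-j}`,
where `p_0 = 1`, `p_k = a_1⋯a_{k-1}(a_k+b_k)` for `1 ≤ k ≤ m-1`, and
`p_k = a_1⋯a_{m-1} c b_{m-1}⋯b_{2m-k}` for `m ≤ k ≤ 2m-1`. -/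
theorem stmt10 (m : ℕ) (hm : 2 ≤ m) (a b : ℕ → ℂ) (c : ℂ)
    (ha : ∀ i, 1 ≤ i → i ≤ m - 1 → a i ≠ 0)
    (hb : ∀ i, 1 ≤ i → i ≤ m - 1 → b i ≠ 0) (hc : c ≠ 0)
    (p : ℕ → ℂ) (hp0 : p 0 = 1)
    (hp1 : ∀ k, 1 ≤ k → k ≤ m - 1 →
      p k = (∏ i ∈ Finset.Icc 1 (k - 1), a i) * (a k + b k))
    (hp2 : ∀ k, m ≤ k → k ≤ 2 * m - 1 →
      p k = (∏ i ∈ Finset.Icc 1 (m - 1), a i) * c * ∏ i ∈ Finset.Icc (2 * m - k) (m - 1), b i) :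
    ∀ j : Fin (2 * m),
      ((((List.range (m - 1)).map (fun i => yMat m (i + 1) (a (i + 1)))).prod *
        yMat m m c *
        (((List.range (m - 1)).reverse.map (fun i => yMat m (i + 1) (b (i + 1)))).prod))
        (⟨2 * m - 1, by omega⟩ : Fin (2 * m)) j) = p (2 * m - 1 - (j : ℕ)) := by
  intro j
  rw [mul_row]
  have hM : (fun x => (((List.range (m - 1)).map (fun i => yMat m (i + 1) (a (i + 1)))).prod *
      yMat m m c) (⟨2 * m - 1, by omega⟩ : Fin (2 * m)) x) = uv m a b c 0 :=
    funext (row_u0 m hm a b c)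
  rw [hM]
  have hB := rowB m hm a b c (m-1) le_rfl j
  rw [show m-1-(m-1) = 0 by omega] at hB
  rw [hB, uv]
  by_cases h1 : m + (m-1) ≤ (j:ℕ)
  · rw [if_pos h1]
    have hj : (j:ℕ) = 2*m-1 := by omega
    rw [hj, show 2*m-1-(2*m-1) = 0 by omega, hp0,
      show Icc 1 0 = (∅ : Finset ℕ) from rfl]
    simp
  · rw [if_neg h1]
    by_cases h2 : m ≤ (j:ℕ)
    · rw [if_pos h2, hp1 (2*m-1-(j:ℕ)) (by omega) (by omega),
        show 2*m-1-(j:ℕ)-1 = 2*m-2-(j:ℕ) by omega]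
    · rw [if_neg h2, if_pos (by omega), hp2 (2*m-1-(j:ℕ)) (by omega) (by omega),
        show 2*m-(2*m-1-(j:ℕ)) = (j:ℕ)+1 by omega]
end
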